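/- (BVFT identification.) In the finite MDP setting, let μ be a fully supported probability distribution on S×A, let Q₁, …, Q_m : S×A → ℝ be candidate functions, and for each pair (i,j) let φ_{i,j}(s,a) = (Q_i(s,a), Q_j(s,a)) and let T_{G_{i,j}} be the projected Bellman operator induced by φ_{i,j} and μ. Suppose Q* ∈ {Q₁, …, Q_m}, i.e., Q_{i*} = Q* for some index i*. Then for every i: Q_i = Q* if and only if the BVFT loss max_{j=1,…,m} ∥Q_i − T_{G_{i,j}} Q_i∥_{2,μ} equals 0. -/

import Mathlib

open Finset

/-- Cellwise `μ`-weighted average over the cells of `φ`. -/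
noncomputable def cellAvg {S A I : Type*} [Fintype S] [Fintype A] [DecidableEq I]
    (μ : S × A → ℝ) (φ : S × A → I) (h : S × A → ℝ) (x : S × A) : ℝ :=
  (∑ y : S × A, if φ y = φ x then μ y * h y else 0) /
  (∑ y : S × A, if φ y = φ x then μ y else 0)

/-- The Bellman optimality operator. -/
noncomputable def TOpt {S A : Type*} [Fintype S] [Fintype A] [Nonempty A]
    (R : S × A → ℝ) (P : S × A → S → ℝ) (γ : ℝ) (Q : S × A → ℝ) (x : S × A) : ℝ :=
  R x + γ * ∑ s' : S, P x s' * (univ.sup' univ_nonempty fun a' => Q (s', a'))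

/-- The `μ`-weighted `L₂` norm. -/
noncomputable def l2mu {S A : Type*} [Fintype S] [Fintype A]
    (μ : S × A → ℝ) (f : S × A → ℝ) : ℝ :=
  Real.sqrt (∑ x : S × A, μ x * f x ^ 2)

section aux
variable {S A I : Type*} [Fintype S] [Fintype A] [DecidableEq I]

lemma denom_pos (μ : S × A → ℝ) (hμ : ∀ x, 0 < μ x) (φ : S × A → I) (x : S × A) :
    0 < ∑ y : S × A, if φ y = φ x then μ y else 0 := by
  apply Finset.sum_pos'
  · intro y _; split
    · exact (hμ y).le
    · exact le_refl 0
  · exact ⟨x, mem_univ x, by simp [hμ x]⟩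

lemma cellAvg_meas (μ : S × A → ℝ) (hμ : ∀ x, 0 < μ x) (φ : S × A → I) (h : S × A → ℝ)
    (hm : ∀ x y, φ y = φ x → h y = h x) (x : S × A) : cellAvg μ φ h x = h x := by
  unfold cellAvg
  have : (∑ y : S × A, if φ y = φ x then μ y * h y else 0)
      = (∑ y : S × A, if φ y = φ x then μ y else 0) * h x := by
    rw [Finset.sum_mul]
    apply Finset.sum_congr rfl
    intro y _
    split_ifs with hc
    · rw [hm x y hc]
    · simp
  rw [this, mul_div_cancel_left₀ _ (denom_pos μ hμ φ x).ne']

lemma cellAvg_sub (μ : S × A → ℝ) (φ : S × A → I) (h₁ h₂ : S × A → ℝ) (x : S × A) :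
    cellAvg μ φ h₁ x - cellAvg μ φ h₂ x = cellAvg μ φ (fun y => h₁ y - h₂ y) x := by
  unfold cellAvg
  rw [div_sub_div_same, ← Finset.sum_sub_distrib]
  congr 1
  apply Finset.sum_congr rfl
  intro y _
  split_ifs <;> ring

lemma cellAvg_abs_le (μ : S × A → ℝ) (hμ : ∀ x, 0 < μ x) (φ : S × A → I) (h : S × A → ℝ)
    (c : ℝ) (hc : ∀ y, |h y| ≤ c) (x : S × A) : |cellAvg μ φ h x| ≤ c := by
  have hd := denom_pos μ hμ φ x
  unfold cellAvg
  rw [abs_div, abs_of_pos hd, div_le_iff₀ hd]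
  calc |∑ y : S × A, if φ y = φ x then μ y * h y else 0|
      ≤ ∑ y : S × A, |if φ y = φ x then μ y * h y else 0| := Finset.abs_sum_le_sum_abs _ _
    _ ≤ ∑ y : S × A, (if φ y = φ x then μ y else 0) * c := by
        apply Finset.sum_le_sum
        intro y _
        split_ifs with hcond
        · rw [abs_mul, abs_of_pos (hμ y)]
          exact mul_le_mul_of_nonneg_left (hc y) (hμ y).le
        · simp
    _ = c * ∑ y : S × A, (if φ y = φ x then μ y else 0) := by
        rw [Finset.mul_sum]; congr 1; ext y; ring

lemma sup'_abs_sub_le {B : Type*} [Fintype B] [Nonempty B] (f g : B → ℝ) (c : ℝ)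
    (hc : ∀ b, |f b - g b| ≤ c) :
    |(univ.sup' univ_nonempty f) - (univ.sup' univ_nonempty g)| ≤ c := by
  rw [abs_sub_le_iff]
  constructor
  · rw [sub_le_iff_le_add]
    apply Finset.sup'_le
    intro b _
    have := (abs_sub_le_iff.mp (hc b)).1
    have h2 : f b ≤ g b + c := by linarith
    calc f b ≤ g b + c := h2
      _ ≤ univ.sup' univ_nonempty g + c := add_le_add (Finset.le_sup' g (mem_univ b)) le_rfl
      _ = c + univ.sup' univ_nonempty g := add_comm _ _
  · rw [sub_le_iff_le_add]
    apply Finset.sup'_le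
    intro b _
    have := (abs_sub_le_iff.mp (hc b)).2
    have h2 : g b ≤ f b + c := by linarith
    calc g b ≤ f b + c := h2
      _ ≤ univ.sup' univ_nonempty f + c := add_le_add (Finset.le_sup' f (mem_univ b)) le_rfl
      _ = c + univ.sup' univ_nonempty f := add_comm _ _

end aux

lemma topt_contract {S A : Type*} [Fintype S] [Fintype A] [Nonempty A]
    (R : S × A → ℝ) (P : S × A → S → ℝ) (γ : ℝ)
    (hP0 : ∀ x s', 0 ≤ P x s') (hP1 : ∀ x, ∑ s' : S, P x s' = 1) (hγ0 : 0 ≤ γ)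
    (f g : S × A → ℝ) (C : ℝ) (hC : ∀ y, |f y - g y| ≤ C) (x : S × A) :
    |TOpt R P γ f x - TOpt R P γ g x| ≤ γ * C := by
  set F := fun s' : S => univ.sup' univ_nonempty fun a' => f (s', a') with hF
  set G := fun s' : S => univ.sup' univ_nonempty fun a' => g (s', a') with hG
  have hsup : ∀ s', |F s' - G s'| ≤ C := fun s' => sup'_abs_sub_le _ _ C (fun a => hC (s', a))
  have heq : TOpt R P γ f x - TOpt R P γ g x
      = γ * ∑ s' : S, (P x s' * F s' - P x s' * G s') := by
    unfold TOpt; rw [Finset.sum_sub_distrib]; ring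
  rw [heq, abs_mul, abs_of_nonneg hγ0]
  apply mul_le_mul_of_nonneg_left _ hγ0
  calc |∑ s' : S, (P x s' * F s' - P x s' * G s')|
      ≤ ∑ s' : S, |P x s' * F s' - P x s' * G s'| := Finset.abs_sum_le_sum_abs _ _
    _ ≤ ∑ s' : S, P x s' * C := by
        apply Finset.sum_le_sum; intro s' _
        rw [← mul_sub, abs_mul, abs_of_nonneg (hP0 x s')]
        exact mul_le_mul_of_nonneg_left (hsup s') (hP0 x s')
    _ = C := by rw [← Finset.sum_mul, hP1 x, one_mul]

lemma l2mu_eq_zero_iff {S A : Type*} [Fintype S] [Fintype A]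
    (μ : S × A → ℝ) (hμ : ∀ x, 0 < μ x) (f : S × A → ℝ) :
    l2mu μ f = 0 ↔ ∀ x, f x = 0 := by
  unfold l2mu
  have hnn : ∀ y ∈ (univ : Finset (S × A)), 0 ≤ μ y * f y ^ 2 :=
    fun y _ => mul_nonneg (hμ y).le (sq_nonneg _)
  rw [Real.sqrt_eq_zero (Finset.sum_nonneg hnn)]
  constructor
  · intro h x
    have h1 := (Finset.sum_eq_zero_iff_of_nonneg hnn).mp h x (mem_univ x)
    have h2 : f x ^ 2 = 0 := by
      rcases mul_eq_zero.mp h1 with h' | h'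
      · exact absurd h' (hμ x).ne'
      · exact h'
    exact pow_eq_zero_iff (two_ne_zero) |>.mp h2
  · intro h; simp [h]

/-- BVFT identification: if `Q⋆` is among the candidates `(Q i)_{i : ι}`, then a
candidate `Q i` equals `Q⋆` iff its BVFT loss
`max_j ‖Q i − T_{G_{i,j}} (Q i)‖₂,μ` vanishes, where `G_{i,j}` is induced by the joint
partition `φ_{i,j}(x) = (Q i x, Q j x)`. -/
theorem stmt_3 {S A ι : Type*} [Fintype S] [Fintype A] [Nonempty S] [Nonempty A]
    [Fintype ι] [Nonempty ι]
    (Rmax : ℝ) (R : S × A → ℝ) (hR : ∀ x, 0 ≤ R x ∧ R x ≤ Rmax)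
    (P : S × A → S → ℝ) (hP0 : ∀ x s', 0 ≤ P x s') (hP1 : ∀ x, ∑ s' : S, P x s' = 1)
    (γ : ℝ) (hγ0 : 0 ≤ γ) (hγ1 : γ < 1)
    (μ : S × A → ℝ) (hμpos : ∀ x, 0 < μ x) (hμsum : ∑ x : S × A, μ x = 1)
    (Q : ι → S × A → ℝ)
    (Qstar : S × A → ℝ) (hQstar : TOpt R P γ Qstar = Qstar)
    (hmem : ∃ istar, Q istar = Qstar) :
    ∀ i, Q i = Qstar ↔
      (univ.sup' univ_nonempty fun j : ι =>
        l2mu μ (fun x => Q i x -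
          cellAvg μ (fun y : S × A => (Q i y, Q j y)) (TOpt R P γ (Q i)) x)) = 0 := by
  obtain ⟨istar, histar⟩ := hmem
  intro i
  constructor
  · intro hQ
    apply le_antisymm
    · apply Finset.sup'_le
      intro j _
      have hz : ∀ x, Q i x -
          cellAvg μ (fun y : S × A => (Q i y, Q j y)) (TOpt R P γ (Q i)) x = 0 := by
        intro x
        rw [hQ, hQstar, cellAvg_meas μ hμpos _ _ ?_ x, sub_self]
        intro x y hxy
        exact congrArg Prod.fst hxy
      rw [(l2mu_eq_zero_iff μ hμpos _).mpr hz]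
    · exact le_trans (Real.sqrt_nonneg _) (Finset.le_sup' (fun j : ι => l2mu μ (fun x => Q i x - cellAvg μ (fun y : S × A => (Q i y, Q j y)) (TOpt R P γ (Q i)) x)) (mem_univ i))
  · intro hsup
    have hterm : l2mu μ (fun x => Q i x -
        cellAvg μ (fun y : S × A => (Q i y, Q istar y)) (TOpt R P γ (Q i)) x) = 0 := by
      apply le_antisymm
      · rw [← hsup]
        exact Finset.le_sup' (fun j : ι => l2mu μ (fun x => Q i x - cellAvg μ (fun y : S × A => (Q i y, Q j y)) (TOpt R P γ (Q i)) x)) (mem_univ istar)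
      · exact Real.sqrt_nonneg _
    set φ := fun y : S × A => (Q i y, Q istar y) with hφ
    have hfix : ∀ x, Q i x = cellAvg μ φ (TOpt R P γ (Q i)) x := by
      intro x
      have := (l2mu_eq_zero_iff μ hμpos _).mp hterm x
      linarith
    set C := univ.sup' univ_nonempty fun x : S × A => |Q i x - Qstar x| with hCdef
    have hC : ∀ y, |Q i y - Qstar y| ≤ C := fun y => Finset.le_sup' (fun x : S × A => |Q i x - Qstar x|) (mem_univ y)
    have hstar_meas : ∀ x y, φ y = φ x → Qstar y = Qstar x := by
      intro x y hxy
      have h2 := congrArg Prod.snd hxy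
      simp only [hφ] at h2
      rw [histar] at h2
      exact h2
    have key : ∀ x, |Q i x - Qstar x| ≤ γ * C := by
      intro x
      have h1 : Qstar x = cellAvg μ φ (TOpt R P γ Qstar) x := by
        conv_rhs => rw [hQstar]
        exact (cellAvg_meas μ hμpos φ Qstar hstar_meas x).symm
      rw [hfix x, h1, cellAvg_sub μ φ _ _ x]
      apply cellAvg_abs_le μ hμpos φ _ (γ * C)
      intro y
      exact topt_contract R P γ hP0 hP1 hγ0 _ _ C hC y
    have hC0 : 0 ≤ C := le_trans (abs_nonneg _) (hC (Classical.arbitrary _))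
    have hCle : C ≤ γ * C := Finset.sup'_le _ _ (fun x _ => key x)
    have hCz : C = 0 := by nlinarith
    funext x
    have h3 := hC x
    rw [hCz] at h3
    have h4 : Q i x - Qstar x = 0 := abs_eq_zero.mp (le_antisymm h3 (abs_nonneg _))
    linarith
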